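/- arXiv:1502.02459 — 3 statements merged into one kernel-verified Lean document; each statement's English description precedes it below -/
import Mathlib

section
/- Let (M,d) be a compact metric space, f: M → M a continuous map, and ψ: M → ℝ continuous. Fix ε > 0 and δ ∈ (0,1). Then the function m ↦ P_m^{Kat}(f,ψ,ε) = liminf_{n→∞} (1/n) log N^m(ψ,δ,ε,n), defined on the set of ergodic f-invariant Borel probability measures equipped with the weak* topology, is Borel measurable. -/
open MeasureTheory Filter Set Topology
open scoped ENNReal NNReal

noncomputable section

variable {M : Type*} [MetricSpace M]

/-- The Bowen ball `B_n(x,ε)`. -/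
def bowenBall (f : M → M) (n : ℕ) (x : M) (ε : ℝ) : Set M :=
  {y | ∀ i < n, dist (f^[i] x) (f^[i] y) < ε}

/-- The Birkhoff sum `S_n ψ (x)`. -/
def birkhoff (f : M → M) (ψ : M → ℝ) (n : ℕ) (x : M) : ℝ :=
  ∑ i ∈ Finset.range n, ψ (f^[i] x)

/-- `sup_{y ∈ B_n(x,ε)} S_n ψ (y)`. -/
noncomputable def supBirkhoff (f : M → M) (ψ : M → ℝ) (n : ℕ) (x : M) (ε : ℝ) : ℝ :=
  sSup (birkhoff f ψ n '' bowenBall f n x ε)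

/-- The Carathéodory pre-measure `M(Z,t,ψ,n,ε)`: infimum over finite or countable covers of
`Z` by Bowen balls `B_m(x,ε)` with `m ≥ n` of `∑ exp(-tm + sup_{B_m(x,ε)} S_m ψ)`. -/
noncomputable def presPre (f : M → M) (ψ : M → ℝ) (Z : Set M) (t : ℝ) (n : ℕ) (ε : ℝ) :
    ℝ≥0∞ :=
  ⨅ (C : Set (M × ℕ)) (_ : C.Countable) (_ : ∀ p ∈ C, n ≤ p.2)
    (_ : Z ⊆ ⋃ p ∈ C, bowenBall f p.2 p.1 ε),
    ∑' p : C, ENNReal.ofReal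
      (Real.exp (-(t * (p : M × ℕ).2) + supBirkhoff f ψ (p : M × ℕ).2 (p : M × ℕ).1 ε))

/-- `M(Z,t,ψ,ε) = lim_{n → ∞} M(Z,t,ψ,n,ε)` (the quantity is nondecreasing in `n`). -/
noncomputable def presLim (f : M → M) (ψ : M → ℝ) (Z : Set M) (t : ℝ) (ε : ℝ) : ℝ≥0∞ :=
  ⨆ n : ℕ, presPre f ψ Z t n ε

/-- The topological pressure of `Z` at scale `ε`:
`P(Z,ψ,ε) = inf {t | M(Z,t,ψ,ε) = 0}`. -/
noncomputable def pressureAt (f : M → M) (ψ : M → ℝ) (Z : Set M) (ε : ℝ) : ℝ :=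
  sInf {t : ℝ | presLim f ψ Z t ε = 0}

/-- Generic points of the measure `ν`: points whose empirical measures converge to `ν`
in the weak* topology. -/
def ergGenericPoints (f : M → M) [MeasurableSpace M] (ν : Measure M) : Set M :=
  {x | ∀ g : C(M, ℝ), Tendsto (fun n => birkhoff f g n x / n) atTop (𝓝 (∫ y, g y ∂ν))}

/-- The entropy `H((1/n)·(P ∨ f⁻¹P ∨ ⋯ ∨ f^{-(n-1)}P))` of the `n`-th dynamical refinement of
the finite partition `P`. -/
noncomputable def partH [MeasurableSpace M] (μ : Measure M) (f : M → M) {k : ℕ}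
    (P : Fin k → Set M) (n : ℕ) : ℝ :=
  ∑ a : Fin n → Fin k, Real.negMulLog ((μ (⋂ i : Fin n, f^[(i : ℕ)] ⁻¹' P (a i))).toReal)

/-- The Kolmogorov–Sinai (measure-theoretic) entropy `h_μ(f)`: the supremum over finite
measurable partitions `P` of `lim_n (1/n) H(⋁_{i<n} f^{-i} P)`. -/
noncomputable def ksEntropy [MeasurableSpace M] (f : M → M) (μ : Measure M) : ℝ :=
  sSup {h | ∃ (k : ℕ) (P : Fin k → Set M),
    (∀ i, MeasurableSet (P i)) ∧ Pairwise (Function.onFun Disjoint P) ∧ (⋃ i, P i) = Set.univ ∧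
    h = Filter.atTop.liminf (fun n => partH μ f P n / n)}

/-- Katok's quantity `N^μ(ψ,δ,ε,n)`: the infimum of `∑_{x ∈ S} exp (S_n ψ (x))` over finite
sets `S` which `(n,ε)`-span some set `Z` with `μ(Z) > 1 - δ`. -/
noncomputable def katokN [MeasurableSpace M] (f : M → M) (μ : Measure M) (ψ : M → ℝ)
    (δ ε : ℝ) (n : ℕ) : ℝ :=
  sInf {r | ∃ (S : Finset M) (Z : Set M), ENNReal.ofReal (1 - δ) < μ Z ∧
    (Z ⊆ ⋃ x ∈ S, bowenBall f n x ε) ∧ r = ∑ x ∈ S, Real.exp (birkhoff f ψ n x)}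

/-- Katok's measure-theoretic pressure at scale `ε`:
`P_μ^{Kat}(f,ψ,ε) = liminf_{n→∞} (1/n) log N^μ(ψ,δ,ε,n)`. -/
noncomputable def katokP [MeasurableSpace M] (f : M → M) (μ : Measure M) (ψ : M → ℝ)
    (δ ε : ℝ) : ℝ :=
  Filter.atTop.liminf (fun n => Real.log (katokN f μ ψ δ ε n) / n)

end

section Aux

open MeasureTheory Filter Set Topology
open scoped ENNReal

lemma bowenBall_isOpen {M : Type*} [MetricSpace M] {f : M → M} (hf : Continuous f)
    (n : ℕ) (x : M) (ε : ℝ) : IsOpen (bowenBall f n x ε) := by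
  have h : bowenBall f n x ε =
      ⋂ i ∈ Finset.range n, (f^[i]) ⁻¹' Metric.ball (f^[i] x) ε := by
    ext y
    simp [bowenBall, Metric.mem_ball, dist_comm]
  rw [h]
  exact isOpen_biInter_finset fun i _ => Metric.isOpen_ball.preimage (hf.iterate i)

lemma mem_bowenBall_self {M : Type*} [MetricSpace M] (f : M → M) (n : ℕ) (x : M)
    {ε : ℝ} (hε : 0 < ε) : x ∈ bowenBall f n x ε := fun i _ => by
  simpa using hε

lemma lsc_probMeasure_open {M : Type*} [MetricSpace M] [MeasurableSpace M]
    [OpensMeasurableSpace M] {U : Set M} (hU : IsOpen U) :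
    LowerSemicontinuous (fun ν : ProbabilityMeasure M => (ν : Measure M) U) := by
  intro ν y hy
  have h : (ν : Measure M) U ≤
      (𝓝 ν).liminf fun ν' : ProbabilityMeasure M => (ν' : Measure M) U :=
    ProbabilityMeasure.le_liminf_measure_open_of_tendsto tendsto_id hU
  exact Filter.eventually_lt_of_lt_liminf (lt_of_lt_of_le hy h)

end Aux

/-- For fixed `ε > 0` and `δ ∈ (0,1)`, the map
`m ↦ P_m^{Kat}(f,ψ,ε) = liminf_n (1/n) log N^m(ψ,δ,ε,n)`, defined on the set of ergodic
`f`-invariant Borel probability measures with the weak* topology, is Borel measurable. -/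
theorem katokP_measurable {M : Type*} [MetricSpace M] [CompactSpace M]
    [MeasurableSpace M] [BorelSpace M]
    (f : M → M) (hf : Continuous f) (ψ : M → ℝ) (hψ : Continuous ψ)
    (ε δ : ℝ) (hε : 0 < ε) (hδ : δ ∈ Set.Ioo (0 : ℝ) 1) :
    @Measurable {m : ProbabilityMeasure M // Ergodic f (m : Measure M)} ℝ
      (borel {m : ProbabilityMeasure M // Ergodic f (m : Measure M)}) _
      (fun m => katokP f (m : Measure M) ψ δ ε) := by
  obtain ⟨hδ0, hδ1⟩ := hδ
  letI : MeasurableSpace {m : ProbabilityMeasure M // Ergodic f (m : Measure M)} :=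
    borel {m : ProbabilityMeasure M // Ergodic f (m : Measure M)}
  haveI : BorelSpace {m : ProbabilityMeasure M // Ergodic f (m : Measure M)} := ⟨rfl⟩
  -- measurability of `m ↦ katokN f m ψ δ ε n` for each fixed `n`
  have key : ∀ n : ℕ, Measurable
      (fun m : {m : ProbabilityMeasure M // Ergodic f (m : Measure M)} =>
        katokN f (m : Measure M) ψ δ ε n) := by
    intro n
    set c : Finset M → ℝ := fun S => ∑ x ∈ S, Real.exp (birkhoff f ψ n x) with hc
    set Zs : Finset M → Set M := fun S => ⋃ x ∈ S, bowenBall f n x ε with hZs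
    have hZsOpen : ∀ S : Finset M, IsOpen (Zs S) :=
      fun S => isOpen_biUnion fun x _ => bowenBall_isOpen hf n x ε
    -- the defining set for `katokN` is nonempty and bounded below
    have hbdd : ∀ μ : Measure M, BddBelow {r | ∃ (S : Finset M) (Z : Set M),
        ENNReal.ofReal (1 - δ) < μ Z ∧ (Z ⊆ ⋃ x ∈ S, bowenBall f n x ε) ∧
        r = ∑ x ∈ S, Real.exp (birkhoff f ψ n x)} := by
      intro μ
      refine ⟨0, fun r hr => ?_⟩
      obtain ⟨S, Z, -, -, rfl⟩ := hr
      exact Finset.sum_nonneg fun x _ => (Real.exp_pos _).le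
    have hne : ∀ (μ : Measure M) [IsProbabilityMeasure μ],
        {r | ∃ (S : Finset M) (Z : Set M),
          ENNReal.ofReal (1 - δ) < μ Z ∧ (Z ⊆ ⋃ x ∈ S, bowenBall f n x ε) ∧
          r = ∑ x ∈ S, Real.exp (birkhoff f ψ n x)}.Nonempty := by
      intro μ hμ
      obtain ⟨S, hS⟩ := IsCompact.elim_finite_subcover isCompact_univ
        (fun x => bowenBall f n x ε) (fun x => bowenBall_isOpen hf n x ε)
        (fun x _ => Set.mem_iUnion.2 ⟨x, mem_bowenBall_self f n x hε⟩)
      refine ⟨c S, S, Set.univ, ?_, hS, rfl⟩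
      rw [measure_univ]
      exact ENNReal.ofReal_lt_one.2 (by linarith)
    apply measurable_of_Iio
    intro t
    have hset : (fun m : {m : ProbabilityMeasure M // Ergodic f (m : Measure M)} =>
          katokN f (m : Measure M) ψ δ ε n) ⁻¹' Set.Iio t =
        ⋃ (S : Finset M) (_ : c S < t),
          {m : {m : ProbabilityMeasure M // Ergodic f (m : Measure M)} |
            ENNReal.ofReal (1 - δ) < (m : Measure M) (Zs S)} := by
      ext m
      constructor
      · intro hm
        have hm' : katokN f (m : Measure M) ψ δ ε n < t := hm
        obtain ⟨r, ⟨S, Z, hZ, hZsub, rfl⟩, hrt⟩ :=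
          exists_lt_of_csInf_lt (hne (m : Measure M)) hm'
        refine Set.mem_iUnion.2 ⟨S, Set.mem_iUnion.2 ⟨hrt, ?_⟩⟩
        exact lt_of_lt_of_le hZ (measure_mono hZsub)
      · intro hm
        obtain ⟨S, hS⟩ := Set.mem_iUnion.1 hm
        obtain ⟨hSt, hmS⟩ := Set.mem_iUnion.1 hS
        have hmem : c S ∈ {r | ∃ (S : Finset M) (Z : Set M),
            ENNReal.ofReal (1 - δ) < (m : Measure M) Z ∧
            (Z ⊆ ⋃ x ∈ S, bowenBall f n x ε) ∧
            r = ∑ x ∈ S, Real.exp (birkhoff f ψ n x)} :=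
          ⟨S, Zs S, hmS, subset_rfl, rfl⟩
        have : katokN f (m : Measure M) ψ δ ε n ≤ c S :=
          csInf_le (hbdd (m : Measure M)) hmem
        exact lt_of_le_of_lt this hSt
    rw [hset]
    refine IsOpen.measurableSet (isOpen_iUnion fun S => isOpen_iUnion fun _ => ?_)
    have hopen : IsOpen {ν : ProbabilityMeasure M |
        ENNReal.ofReal (1 - δ) < (ν : Measure M) (Zs S)} :=
      (lsc_probMeasure_open (hZsOpen S)).isOpen_preimage (ENNReal.ofReal (1 - δ))
    exact hopen.preimage continuous_subtype_val
  have hlog : ∀ n : ℕ, Measurable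
      (fun m : {m : ProbabilityMeasure M // Ergodic f (m : Measure M)} =>
        Real.log (katokN f (m : Measure M) ψ δ ε n) / (n : ℝ)) :=
    fun n => (Real.measurable_log.comp (key n)).div_const _
  exact Measurable.liminf hlog
end

section
/- Let f: M → M be a C¹ diffeomorphism of a compact Riemannian manifold and let μ be an f-invariant Borel probability measure. Let Γ ⊆ M be a measurable set with μ(Γ) > 0 and put Ω = ∪_{n∈ℤ} f^n(Γ). Take γ > 0. Then there exists a measurable function N₀: Ω → ℕ such that for μ-almost every x ∈ Ω, every integer n ≥ N₀(x) and every t ∈ [0,1], there is some l ∈ {0,1,…,n} such that f^l(x) ∈ Γ and |(l/n) − t| < γ. -/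
open MeasureTheory Filter Set Topology Manifold

open scoped ENNReal NNReal

set_option linter.unusedSectionVars false

namespace VisitsAux

variable {α : Type*} [MeasurableSpace α] {μ : Measure α} {T : α → α} {Γ : Set α}

/-- No visit to `Γ` at times `1, …, k`. -/
def NoVis (T : α → α) (Γ : Set α) (k : ℕ) : Set α :=
  {x | ∀ j, 1 ≤ j → j ≤ k → T^[j] x ∉ Γ}

lemma measurableSet_noVis (hTm : Measurable T) (hΓ : MeasurableSet Γ) (k : ℕ) :
    MeasurableSet (NoVis T Γ k) := by
  have : NoVis T Γ k = ⋂ j ∈ Finset.Icc 1 k, (T^[j]) ⁻¹' Γᶜ := by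
    ext x
    simp [NoVis, and_imp]
  rw [this]
  exact MeasurableSet.biInter (Finset.Icc 1 k).countable_toSet
    fun j _ => (hTm.iterate j) hΓ.compl

lemma noVis_succ (k : ℕ) : NoVis T Γ (k + 1) = T ⁻¹' (Γᶜ ∩ NoVis T Γ k) := by
  ext x
  simp only [NoVis, mem_setOf_eq, mem_preimage, mem_inter_iff, mem_compl_iff]
  constructor
  · intro h
    refine ⟨h 1 le_rfl (by omega), fun j h1 hk => ?_⟩
    rw [← Function.iterate_succ_apply]
    exact h (j + 1) (by omega) (by omega)
  · rintro ⟨h0, h1⟩ j hj1 hjk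
    match j, hj1 with
    | 1, _ => simpa using h0
    | (i + 2), _ =>
      rw [Function.iterate_succ_apply]
      exact h1 (i + 1) (by omega) (by omega)

lemma tsum_measure_noVis_le_one [IsProbabilityMeasure μ]
    (hT : MeasurePreserving T μ μ) (hΓ : MeasurableSet Γ) :
    ∑' k, μ (Γ ∩ NoVis T Γ k) ≤ 1 := by
  have hTm : Measurable T := hT.measurable
  have key : ∀ K, ∑ k ∈ Finset.range K, μ (Γ ∩ NoVis T Γ k) + μ (NoVis T Γ K)
      = μ (NoVis T Γ 0) := by
    intro K
    induction K with
    | zero => simp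
    | succ K ih =>
      rw [Finset.sum_range_succ, ← ih]
      have h1 : μ (NoVis T Γ (K + 1)) = μ (Γᶜ ∩ NoVis T Γ K) := by
        rw [noVis_succ]
        exact hT.measure_preimage
          ((hΓ.compl.inter (measurableSet_noVis hTm hΓ K)).nullMeasurableSet)
      have h2 : μ (Γ ∩ NoVis T Γ K) + μ (Γᶜ ∩ NoVis T Γ K) = μ (NoVis T Γ K) := by
        rw [Set.inter_comm Γ, Set.inter_comm Γᶜ, ← Set.diff_eq]
        exact measure_inter_add_diff _ hΓ
      rw [h1, add_assoc, h2]
  have hb : ∀ K, ∑ k ∈ Finset.range K, μ (Γ ∩ NoVis T Γ k) ≤ 1 := by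
    intro K
    have h1 : ∑ k ∈ Finset.range K, μ (Γ ∩ NoVis T Γ k) ≤ μ (NoVis T Γ 0) := by
      rw [← key K]; exact le_self_add
    exact h1.trans prob_le_one
  rw [ENNReal.tsum_eq_iSup_sum' (fun K => Finset.range K)
    Finset.exists_nat_subset_range]
  exact iSup_le hb

lemma tsum_div_le (a : ℕ → ℝ≥0∞) (c : ℕ) (hc : c ≠ 0) :
    ∑' m, a (m / c) = c * ∑' k, a k := by
  haveI : NeZero c := ⟨hc⟩
  calc ∑' m, a (m / c) = ∑' p : ℕ × Fin c, a p.1 := by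
        simpa using Equiv.tsum_eq (Nat.divModEquiv c) (fun p : ℕ × Fin c => a p.1)
    _ = ∑' k : ℕ, ∑' r : Fin c, a k := ENNReal.tsum_prod (f := fun k (_ : Fin c) => a k)
    _ = ∑' k : ℕ, (c : ℝ≥0∞) * a k := by
        refine tsum_congr fun k => ?_
        rw [tsum_fintype, Finset.sum_const, Finset.card_univ, Fintype.card_fin,
          nsmul_eq_mul]
    _ = c * ∑' k, a k := ENNReal.tsum_mul_left

lemma bc [IsProbabilityMeasure μ] (hT : MeasurePreserving T μ μ) (hΓ : MeasurableSet Γ)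
    (c : ℕ) (hc : c ≠ 0) :
    ∀ᵐ x ∂μ, ∀ᶠ m in atTop, ¬ (T^[m] x ∈ Γ ∧ T^[m] x ∈ NoVis T Γ (m / c)) := by
  have hTm := hT.measurable
  have hsum : (∑' m, μ ((T^[m]) ⁻¹' (Γ ∩ NoVis T Γ (m / c)))) ≠ ∞ := by
    have heq : ∀ m : ℕ, μ ((T^[m]) ⁻¹' (Γ ∩ NoVis T Γ (m / c)))
        = μ (Γ ∩ NoVis T Γ (m / c)) := fun m =>
      (hT.iterate m).measure_preimage
        ((hΓ.inter (measurableSet_noVis hTm hΓ _)).nullMeasurableSet)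
    have h2 : (∑' m, μ ((T^[m]) ⁻¹' (Γ ∩ NoVis T Γ (m / c))))
        = c * ∑' k, μ (Γ ∩ NoVis T Γ k) := by
      rw [tsum_congr heq]
      exact tsum_div_le (fun k => μ (Γ ∩ NoVis T Γ k)) c hc
    rw [h2]
    have hle : (c : ℝ≥0∞) * ∑' k, μ (Γ ∩ NoVis T Γ k) ≤ c * 1 :=
      mul_le_mul_right (tsum_measure_noVis_le_one hT hΓ) _
    exact ne_top_of_le_ne_top (by simp) hle
  filter_upwards [ae_eventually_notMem hsum] with x hx
  refine hx.mono fun m hm hmem => hm ?_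
  exact ⟨hmem.1, hmem.2⟩

lemma chain {vis : ℕ → Prop} {Mb c : ℕ}
    (h : ∀ m, Mb ≤ m → vis m → ∃ j, 1 ≤ j ∧ j ≤ m / c ∧ vis (m + j)) :
    ∀ s l, Mb ≤ l → l ≤ s → vis l →
      ∃ l', vis l' ∧ Mb ≤ l' ∧ l' ≤ s ∧ s - l' ≤ l' / c := by
  intro s
  have H : ∀ d l, s - l = d → Mb ≤ l → l ≤ s → vis l →
      ∃ l', vis l' ∧ Mb ≤ l' ∧ l' ≤ s ∧ s - l' ≤ l' / c := by
    intro d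
    induction d using Nat.strong_induction_on with
    | _ d ih =>
      intro l hd hMl hls hvl
      by_cases hcase : s ≤ l + l / c
      · exact ⟨l, hvl, hMl, hls, by omega⟩
      · obtain ⟨j, hj1, hjc, hvj⟩ := h l hMl hvl
        exact ih (s - (l + j)) (by omega) (l + j) rfl (by omega) (by omega) hvj
  exact fun l hMl hls hvl => H (s - l) l rfl hMl hls hvl

lemma measurableSet_Q (hTm : Measurable T) (hΓ : MeasurableSet Γ) (γ : ℝ) (n : ℕ) :
    MeasurableSet {x | ∀ t ∈ Icc (0:ℝ) 1,
      ∃ l ≤ n, T^[l] x ∈ Γ ∧ |((l:ℝ)/(n:ℝ)) - t| < γ} := by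
  classical
  have hset : {x | ∀ t ∈ Icc (0:ℝ) 1,
        ∃ l ≤ n, T^[l] x ∈ Γ ∧ |((l:ℝ)/(n:ℝ)) - t| < γ} =
      ⋃ S ∈ ((Finset.range (n+1)).powerset.filter
        (fun S => ∀ t ∈ Icc (0:ℝ) 1, ∃ l : ℕ, l ∈ S ∧ |((l:ℝ)/(n:ℝ)) - t| < γ)),
        ⋂ l ∈ S, (T^[l]) ⁻¹' Γ := by
    ext x
    simp only [mem_setOf_eq, mem_iUnion, Finset.mem_coe, Finset.mem_filter,
      Finset.mem_powerset, mem_iInter, mem_preimage]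
    constructor
    · intro hx
      refine ⟨(Finset.range (n+1)).filter (fun l => T^[l] x ∈ Γ),
        ⟨⟨Finset.filter_subset _ _, ?_⟩, ?_⟩⟩
      · intro t ht
        obtain ⟨l, hln, hvis, hlt⟩ := hx t ht
        exact ⟨l, Finset.mem_filter.2 ⟨Finset.mem_range.2 (by omega), hvis⟩, hlt⟩
      · intro l hl
        exact (Finset.mem_filter.1 hl).2
    · rintro ⟨S, ⟨hSsub, hSgood⟩, hSvis⟩ t ht
      obtain ⟨l, hlS, hlt⟩ := hSgood t ht
      have hln : l ≤ n := by
        have := hSsub hlS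
        rw [Finset.mem_range] at this
        omega
      exact ⟨l, hln, hSvis l hlS, hlt⟩
  rw [hset]
  exact MeasurableSet.biUnion (Finset.countable_toSet _)
    fun S _ => MeasurableSet.biInter (Finset.countable_toSet _)
      fun l _ => (hTm.iterate l) hΓ

lemma measurable_sInf_P {P : α → ℕ → Prop} (hP : ∀ N, MeasurableSet {x | P x N}) :
    Measurable fun x => sInf {N | P x N} := by
  apply measurable_to_countable'
  intro k
  by_cases hk0 : k = 0
  · subst hk0
    have : (fun x => sInf {N | P x N}) ⁻¹' {0} =
        {x | P x 0} ∪ ⋂ N, {x | P x N}ᶜ := by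
      ext x
      simp only [mem_preimage, mem_singleton_iff, mem_union, mem_iInter, mem_setOf_eq,
        mem_compl_iff, Nat.sInf_eq_zero]
      rw [eq_empty_iff_forall_notMem]
      simp
    rw [this]
    exact (hP 0).union (MeasurableSet.iInter fun N => (hP N).compl)
  · have : (fun x => sInf {N | P x N}) ⁻¹' {k} =
        {x | P x k} ∩ ⋂ j, ⋂ _ : j < k, {x | P x j}ᶜ := by
      ext x
      simp only [mem_preimage, mem_singleton_iff, mem_inter_iff, mem_iInter, mem_setOf_eq,
        mem_compl_iff]
      constructor
      · intro hk
        have hne : {N | P x N}.Nonempty := by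
          by_contra hne
          rw [Set.not_nonempty_iff_eq_empty] at hne
          rw [hne, Nat.sInf_empty] at hk
          exact hk0 hk.symm
        exact ⟨hk ▸ Nat.sInf_mem hne, fun j hj => Nat.notMem_of_lt_sInf (hk ▸ hj)⟩
      · rintro ⟨hPk, hlt⟩
        have hle : sInf {N | P x N} ≤ k := Nat.sInf_le hPk
        rcases lt_or_eq_of_le hle with h | h
        · exact absurd (Nat.sInf_mem ⟨k, hPk⟩) (hlt _ h)
        · exact h
    rw [this]
    exact (hP k).inter (MeasurableSet.iInter fun j => MeasurableSet.iInter
      fun _ => (hP j).compl)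

end VisitsAux


open VisitsAux in
/-- Let `f` be a `C¹` diffeomorphism of a compact Riemannian manifold `M`
(formalized as a compact metric space with a smooth structure modelled on `ℝ^d`), `μ` an
`f`-invariant Borel probability measure, `Γ` a measurable set with `μ(Γ) > 0`, and
`Ω = ⋃_{n ∈ ℤ} f^n(Γ)`.  For every `γ > 0` there is a measurable `N₀` such that for a.e.
`x ∈ Ω`, every `n ≥ N₀(x)` and every `t ∈ [0,1]` there is `l ∈ {0,…,n}` with `f^l(x) ∈ Γ`
and `|l/n − t| < γ`. -/
theorem visits_at_prescribed_frequency {d : ℕ} {M : Type*} [MetricSpace M] [CompactSpace M]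
    [ChartedSpace (EuclideanSpace ℝ (Fin d)) M] [IsManifold (𝓡 d) (⊤ : ℕ∞) M]
    [MeasurableSpace M] [BorelSpace M]
    (f : Diffeomorph (𝓡 d) (𝓡 d) M M 1)
    (μ : Measure M) [IsProbabilityMeasure μ] (hf : MeasurePreserving f μ μ)
    (Γ : Set M) (hΓ : MeasurableSet Γ) (hΓpos : 0 < μ Γ)
    (γ : ℝ) (hγ : 0 < γ) :
    ∃ N₀ : M → ℕ, Measurable N₀ ∧
      ∀ᵐ x ∂μ, x ∈ ⋃ n : ℤ, ⇑(f.toEquiv ^ n) '' Γ →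
        ∀ n : ℕ, N₀ x ≤ n → ∀ t ∈ Set.Icc (0 : ℝ) 1,
          ∃ l ≤ n, (⇑f)^[l] x ∈ Γ ∧ |((l : ℝ) / (n : ℝ)) - t| < γ := by
  classical
  set T : M → M := ⇑f with hTdef
  have hTm : Measurable T := f.continuous.measurable
  set e : Equiv.Perm M := f.toEquiv with he
  have hfe : MeasurePreserving (⇑e) μ μ := hf
  have hfsymm : MeasurePreserving (⇑e.symm) μ μ := by
    have hsm : Measurable (⇑e.symm) := f.symm.continuous.measurable
    let E : M ≃ᵐ M := ⟨e, hTm, hsm⟩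
    exact MeasurePreserving.symm E hfe
  have hzpow : ∀ n : ℤ, MeasurePreserving (⇑(e ^ n)) μ μ := by
    intro n
    induction n using Int.induction_on with
    | zero => simpa using MeasurePreserving.id μ
    | succ n ih =>
      have hco : (⇑(e ^ ((n : ℤ) + 1))) = ⇑(e ^ (n : ℤ)) ∘ ⇑e := by
        rw [zpow_add_one]; rfl
      rw [hco]; exact ih.comp hfe
    | pred n ih =>
      have hco : (⇑(e ^ (-(n : ℤ) - 1))) = ⇑(e ^ (-(n : ℤ))) ∘ ⇑e.symm := by
        rw [zpow_sub_one]; rfl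
      rw [hco]; exact ih.comp hfsymm
  have hiter : ∀ (k : ℕ) (y : M), T^[k] y = (e ^ (k : ℤ)) y := by
    intro k
    induction k with
    | zero => intro y; simp
    | succ k ih =>
      intro y
      have h1 : ((k + 1 : ℕ) : ℤ) = 1 + (k : ℤ) := by push_cast; ring
      rw [Function.iterate_succ_apply', ih y, h1, zpow_add, zpow_one]
      rfl
  have hcomp : ∀ (a b : ℤ) (y : M), (e ^ a) ((e ^ b) y) = (e ^ (a + b)) y := by
    intro a b y; rw [zpow_add]; rfl
  set G : Set M := {x | ∃ᶠ k in atTop, T^[k] x ∈ Γ} with hG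
  have h1 : ∀ᵐ x ∂μ, x ∈ Γ → ∃ᶠ k in atTop, T^[k] x ∈ Γ :=
    hf.conservative.ae_mem_imp_frequently_image_mem hΓ.nullMeasurableSet
  have hS0 : μ (Γ \ G) = 0 := by
    rw [MeasureTheory.ae_iff] at h1
    refine measure_mono_null ?_ h1
    intro x hx
    simp only [mem_diff] at hx
    simp only [mem_setOf_eq]
    exact fun h => hx.2 (h hx.1)
  have hsub : (⋃ n : ℤ, ⇑(e ^ n) '' Γ) \ G ⊆ ⋃ n : ℤ, ⇑(e ^ n) '' (Γ \ G) := by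
    rintro x ⟨hxU, hxG⟩
    rw [mem_iUnion] at hxU ⊢
    obtain ⟨n, y, hyΓ, rfl⟩ := hxU
    refine ⟨n, y, ⟨hyΓ, fun hyG => hxG ?_⟩, rfl⟩
    have hyfreq : ∃ᶠ k in atTop, T^[k] y ∈ Γ := hyG
    show ∃ᶠ m in atTop, T^[m] ((e ^ n) y) ∈ Γ
    rw [frequently_atTop] at hyfreq ⊢
    intro N
    obtain ⟨k, hk, hkΓ⟩ := hyfreq (N + n.natAbs)
    refine ⟨((k : ℤ) - n).toNat, by omega, ?_⟩
    rw [hiter, hcomp]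
    have hke : ((((k : ℤ) - n).toNat : ℤ) + n) = (k : ℤ) := by omega
    rw [hke, ← hiter]
    exact hkΓ
  have hA : ∀ᵐ x ∂μ, x ∈ (⋃ n : ℤ, ⇑(e ^ n) '' Γ) → x ∈ G := by
    have hnull : μ ((⋃ n : ℤ, ⇑(e ^ n) '' Γ) \ G) = 0 := by
      refine measure_mono_null hsub (measure_iUnion_null fun n => ?_)
      rw [Equiv.image_eq_preimage_symm]
      have hsymm : ⇑(e ^ n).symm = ⇑(e ^ (-n)) := by rw [zpow_neg]; rfl
      rw [hsymm]
      exact ((hzpow (-n)).quasiMeasurePreserving).preimage_null hS0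
    rw [MeasureTheory.ae_iff]
    refine measure_mono_null ?_ hnull
    intro x hx
    simp only [mem_setOf_eq] at hx
    rw [_root_.not_imp] at hx
    exact ⟨hx.1, hx.2⟩
  obtain ⟨c, hc⟩ := exists_nat_gt (2 / γ)
  have hcpos : (0 : ℝ) < c := lt_trans (by positivity) hc
  have hc0 : c ≠ 0 := by exact_mod_cast hcpos.ne'
  have hcγ : 1 / (c : ℝ) < γ / 2 := by
    rw [div_lt_div_iff₀ hcpos two_pos]
    rw [div_lt_iff₀ hγ] at hc
    nlinarith
  have hB : ∀ᵐ x ∂μ, ∀ᶠ m in atTop,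
      ¬ (T^[m] x ∈ Γ ∧ T^[m] x ∈ NoVis T Γ (m / c)) := VisitsAux.bc hf hΓ c hc0
  let Q : M → ℕ → Prop := fun x n =>
    ∀ t ∈ Icc (0 : ℝ) 1, ∃ l ≤ n, T^[l] x ∈ Γ ∧ |((l : ℝ) / (n : ℝ)) - t| < γ
  have hQ : ∀ n, MeasurableSet {x | Q x n} := fun n =>
    VisitsAux.measurableSet_Q hTm hΓ γ n
  let P : M → ℕ → Prop := fun x N => ∀ n, N ≤ n → Q x n
  have hPmeas : ∀ N, MeasurableSet {x | P x N} := by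
    intro N
    have hPe : {x | P x N} = ⋂ n, ⋂ _ : N ≤ n, {x | Q x n} := by
      ext x
      simp only [mem_setOf_eq, mem_iInter]
      exact Iff.rfl
    rw [hPe]
    exact MeasurableSet.iInter fun n => MeasurableSet.iInter fun _ => hQ n
  refine ⟨fun x => sInf {N | P x N}, VisitsAux.measurable_sInf_P hPmeas, ?_⟩
  filter_upwards [hA, hB] with x hAx hBx hxΩ
  suffices hex : ∃ N, P x N by
    intro n hn
    exact Nat.sInf_mem hex n hn
  have hGx : ∃ᶠ k in atTop, T^[k] x ∈ Γ := hAx hxΩ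
  obtain ⟨Mb, hMb⟩ := eventually_atTop.1 hBx
  have hnext : ∀ m, Mb ≤ m → T^[m] x ∈ Γ →
      ∃ j, 1 ≤ j ∧ j ≤ m / c ∧ T^[m + j] x ∈ Γ := by
    intro m hm hv
    have h2 := hMb m hm
    have h3 : T^[m] x ∉ NoVis T Γ (m / c) := fun hmem => h2 ⟨hv, hmem⟩
    simp only [NoVis, mem_setOf_eq] at h3
    push_neg at h3
    obtain ⟨j, hj1, hjc, hjΓ⟩ := h3
    refine ⟨j, hj1, hjc, ?_⟩
    rw [Nat.add_comm, Function.iterate_add_apply]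
    exact hjΓ
  obtain ⟨m₁, hm₁ge, hm₁⟩ := frequently_atTop.1 hGx (max Mb 1)
  have hchain := VisitsAux.chain hnext
  obtain ⟨N, hN⟩ := exists_nat_gt (max ((m₁ : ℝ) + 1) (((m₁ : ℝ) + 2) / γ))
  refine ⟨N, ?_⟩
  intro n hn t ht
  obtain ⟨ht0, ht1⟩ := ht
  have hm₁Mb : Mb ≤ m₁ := le_trans (le_max_left _ _) hm₁ge
  have hm₁1 : 1 ≤ m₁ := le_trans (le_max_right _ _) hm₁ge
  have hm₁1R : (1 : ℝ) ≤ (m₁ : ℝ) := by exact_mod_cast hm₁1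
  have hnN : (N : ℝ) ≤ n := Nat.cast_le.2 hn
  have hNgt1 : ((m₁ : ℝ) + 1) < N := lt_of_le_of_lt (le_max_left _ _) hN
  have hNgt2 : ((m₁ : ℝ) + 2) / γ < N := lt_of_le_of_lt (le_max_right _ _) hN
  have hnpos : (0 : ℝ) < n := by
    have hm0 : (0 : ℝ) ≤ (m₁ : ℝ) := Nat.cast_nonneg _
    linarith
  have hm₁n : (m₁ : ℝ) < n := by linarith
  have hm₁len : m₁ ≤ n := by exact_mod_cast hm₁n.le
  have hγn : (m₁ : ℝ) + 2 < γ * n := by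
    have h5 : ((m₁ : ℝ) + 2) / γ < n := lt_of_lt_of_le hNgt2 hnN
    rw [div_lt_iff₀ hγ] at h5
    nlinarith
  by_cases hcase : t * n ≤ (m₁ : ℝ)
  · refine ⟨m₁, hm₁len, hm₁, ?_⟩
    rw [abs_sub_lt_iff]
    constructor
    · have h6 : (m₁ : ℝ) / n < γ := by rw [div_lt_iff₀ hnpos]; nlinarith
      linarith
    · have h7 : t ≤ (m₁ : ℝ) / n := by rw [le_div_iff₀ hnpos]; exact hcase
      linarith
  · push_neg at hcase
    set s := ⌊t * (n : ℝ)⌋₊ with hs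
    have htn0 : 0 ≤ t * n := mul_nonneg ht0 hnpos.le
    have hm₁s : m₁ ≤ s := Nat.le_floor hcase.le
    have hsle : (s : ℝ) ≤ t * n := Nat.floor_le htn0
    have hsub1 : t * n < (s : ℝ) + 1 := Nat.lt_floor_add_one (t * n)
    have hsn : s ≤ n := by
      have h8 : (s : ℝ) ≤ n := le_trans hsle (by nlinarith)
      exact_mod_cast h8
    obtain ⟨l', hvl', hMl', hl's, hgap⟩ := hchain s m₁ hm₁Mb hm₁s hm₁
    refine ⟨l', le_trans hl's hsn, hvl', ?_⟩
    have hl'c : ((l' / c : ℕ) : ℝ) ≤ (l' : ℝ) / c := Nat.cast_div_le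
    have hgapN : s ≤ l' + l' / c := by omega
    have hgapR : (s : ℝ) ≤ (l' : ℝ) + ((l' / c : ℕ) : ℝ) := by exact_mod_cast hgapN
    have hl'n : (l' : ℝ) ≤ n := by exact_mod_cast le_trans hl's hsn
    have hl'sR : (l' : ℝ) ≤ s := by exact_mod_cast hl's
    have hl'tn : (l' : ℝ) ≤ t * n := le_trans hl'sR hsle
    rw [abs_sub_lt_iff]
    constructor
    · have h9 : (l' : ℝ) / n ≤ t := by rw [div_le_iff₀ hnpos]; linarith
      linarith
    · have hkey : t * n < (l' : ℝ) + γ * n := by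
        have ha : (l' : ℝ) / c ≤ (n : ℝ) / c := div_le_div_of_nonneg_right hl'n hcpos.le
        have hbe : (n : ℝ) / c = n * (1 / c) := by ring
        have hb' : (n : ℝ) * (1 / c) < n * (γ / 2) := mul_lt_mul_of_pos_left hcγ hnpos
        have h3 : (1 : ℝ) < (γ / 2) * n := by linarith
        linarith [hsub1, hgapR, hl'c, ha, hbe, hb', h3]
      have h4 : (t - (l' : ℝ) / n) * n = t * n - l' := by field_simp
      have h5 : (t - (l' : ℝ) / n) * n < γ * n := by rw [h4]; linarith
      exact lt_of_mul_lt_mul_right h5 hnpos.le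
end

section
/- (Generalised Pressure Distribution Principle) Let (M,d,f) be a topological dynamical system, ψ: M → ℝ continuous, and Z ⊆ M an arbitrary Borel set. Suppose there exist ε > 0 and s ≥ 0 such that one can find a sequence of Borel probability measures μ_k on M, a constant K > 0 and an integer N satisfying limsup_{k→∞} μ_k(B_n(x,ε)) ≤ K exp(−ns + Σ_{i=0}^{n−1}ψ(f^i x)) for every Bowen ball B_n(x,ε) with B_n(x,ε) ∩ Z ≠ ∅ and n ≥ N. Suppose furthermore that at least one weak* limit measure ν of the sequence (μ_k) satisfies ν(Z) > 0. Then P(Z, ψ, ε) ≥ s. -/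
open MeasureTheory Filter Set Topology
open scoped ENNReal NNReal

section PDPaux

open MeasureTheory Filter Set Topology
open scoped ENNReal NNReal

variable {M : Type*} [MetricSpace M]

lemma bowenBall_eq (f : M → M) (n : ℕ) (x : M) (ε : ℝ) :
    bowenBall f n x ε = ⋂ i ∈ Finset.range n, (f^[i]) ⁻¹' Metric.ball (f^[i] x) ε := by
  ext y
  simp [bowenBall, Metric.mem_ball, dist_comm]

lemma isOpen_bowenBall {f : M → M} (hf : Continuous f) (n : ℕ) (x : M) (ε : ℝ) :
    IsOpen (bowenBall f n x ε) := by
  rw [bowenBall_eq]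
  exact isOpen_biInter_finset fun i _ => (Metric.isOpen_ball).preimage (hf.iterate i)

lemma self_mem_bowenBall (f : M → M) (n : ℕ) (x : M) {ε : ℝ} (hε : 0 < ε) :
    x ∈ bowenBall f n x ε := by
  intro i _
  simpa using hε

lemma birkhoff_le_of_bound {f : M → M} {ψ : M → ℝ} {B : ℝ} (hB : ∀ x, |ψ x| ≤ B)
    (n : ℕ) (y : M) : birkhoff f ψ n y ≤ n * B := by
  calc birkhoff f ψ n y ≤ ∑ i ∈ Finset.range n, B :=
        Finset.sum_le_sum fun i _ => (abs_le.mp (hB _)).2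
    _ = n * B := by simp [Finset.sum_const, mul_comm]

lemma bddAbove_birkhoff_image {f : M → M} {ψ : M → ℝ} {B : ℝ} (hB : ∀ x, |ψ x| ≤ B)
    (n : ℕ) (x : M) (ε : ℝ) : BddAbove (birkhoff f ψ n '' bowenBall f n x ε) := by
  refine ⟨n * B, ?_⟩
  rintro r ⟨y, -, rfl⟩
  exact birkhoff_le_of_bound hB n y

lemma supBirkhoff_le {f : M → M} {ψ : M → ℝ} {B : ℝ} (hB : ∀ x, |ψ x| ≤ B) (hB0 : 0 ≤ B)
    (n : ℕ) (x : M) (ε : ℝ) : supBirkhoff f ψ n x ε ≤ n * B := by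
  refine Real.sSup_le ?_ (by positivity)
  rintro r ⟨y, -, rfl⟩
  exact birkhoff_le_of_bound hB n y

lemma birkhoff_le_supBirkhoff {f : M → M} {ψ : M → ℝ} {B : ℝ} (hB : ∀ x, |ψ x| ≤ B)
    (n : ℕ) (x : M) {ε : ℝ} (hε : 0 < ε) : birkhoff f ψ n x ≤ supBirkhoff f ψ n x ε :=
  le_csSup (bddAbove_birkhoff_image hB n x ε)
    (Set.mem_image_of_mem _ (self_mem_bowenBall f n x hε))

/-- For a compact nonempty space, there is a `t` with `presLim f ψ Z t ε = 0`. -/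
lemma exists_presLim_zero [CompactSpace M] [Nonempty M] {f : M → M} (hf : Continuous f)
    {ψ : M → ℝ} (hψ : Continuous ψ) (Z : Set M) {ε : ℝ} (hε : 0 < ε) :
    ∃ t : ℝ, presLim f ψ Z t ε = 0 := by
  classical
  -- a bound for ψ
  set Ψ : BoundedContinuousFunction M ℝ := BoundedContinuousFunction.mkOfCompact ⟨ψ, hψ⟩ with hΨ
  have hB : ∀ x, |ψ x| ≤ ‖Ψ‖ := fun x => by
    exact (by simpa [Real.norm_eq_abs] using Ψ.norm_coe_le_norm x : |Ψ x| ≤ ‖Ψ‖)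
  set B : ℝ := ‖Ψ‖ with hBdef
  have hB0 : 0 ≤ B := norm_nonneg _
  -- a finite (ε/2)-net
  obtain ⟨D, hDfin, hDcov⟩ := Metric.totallyBounded_iff.mp (isCompact_univ (X := M)).totallyBounded (ε/2)
    (half_pos hε)
  have hnd : ∀ y : M, ∃ z, z ∈ D ∧ dist y z < ε/2 := by
    intro y
    have := hDcov (Set.mem_univ y)
    simpa [Metric.mem_ball] using this
  choose nd hndD hnddist using hnd
  set DF : Finset M := hDfin.toFinset with hDF
  set c : ℕ := DF.card with hc
  have hc1 : 1 ≤ c := by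
    have : nd (Classical.arbitrary M) ∈ DF := hDfin.mem_toFinset.mpr (hndD _)
    exact Finset.card_pos.mpr ⟨_, this⟩
  have hcR : (0:ℝ) < c := by exact_mod_cast hc1
  refine ⟨B + Real.log c + 1, ?_⟩
  set t : ℝ := B + Real.log c + 1 with htdef
  rw [presLim, ENNReal.iSup_eq_zero]
  intro n
  -- for every m ≥ n there is a cover of order m with small total sum
  have key : ∀ m, n ≤ m →
      presPre f ψ Z t n ε ≤ ENNReal.ofReal (Real.exp (-(m:ℝ))) := by
    intro m hm
    set it : M → (Fin m → M) := fun y i => nd (f^[(i:ℕ)] y) with hit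
    set R : Set (Fin m → M) := Set.range it with hR
    have hRsub : R ⊆ Set.univ.pi (fun _ : Fin m => D) := by
      rintro a ⟨y, rfl⟩ i -
      exact hndD _
    have hRfin : R.Finite := (Set.Finite.pi fun _ => hDfin).subset hRsub
    set rep : (Fin m → M) → M := Function.invFun it with hrep
    have hrepit : ∀ y : M, it (rep (it y)) = it y := fun y => Function.invFun_eq ⟨y, rfl⟩
    have hcov : ∀ y : M, y ∈ bowenBall f m (rep (it y)) ε := by
      intro y i hi
      have h1 : nd (f^[i] (rep (it y))) = nd (f^[i] y) := congrFun (hrepit y) ⟨i, hi⟩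
      calc dist (f^[i] (rep (it y))) (f^[i] y)
          ≤ dist (f^[i] (rep (it y))) (nd (f^[i] (rep (it y))))
            + dist (nd (f^[i] (rep (it y)))) (f^[i] y) := dist_triangle _ _ _
        _ < ε/2 + ε/2 := by
            refine add_lt_add (hnddist _) ?_
            rw [h1, dist_comm]
            exact hnddist _
        _ = ε := add_halves ε
    set C : Set (M × ℕ) := (fun a => (rep a, m)) '' R with hC
    have hCfin : C.Finite := hRfin.image _
    have hle : presPre f ψ Z t n ε ≤
        ∑' p : C, ENNReal.ofReal
          (Real.exp (-(t * (p : M × ℕ).2) + supBirkhoff f ψ (p : M × ℕ).2 (p : M × ℕ).1 ε)) := by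
      refine le_trans (iInf_le _ C) ?_
      refine le_trans (iInf_le _ hCfin.countable) ?_
      refine le_trans (iInf_le _ ?_) (iInf_le _ ?_)
      · rintro p ⟨a, -, rfl⟩
        exact hm
      · intro z hz
        exact Set.mem_biUnion ⟨it z, ⟨z, rfl⟩, rfl⟩ (hcov z)
    -- bound the finite sum
    set K0 : ℝ≥0∞ := ENNReal.ofReal (Real.exp (-(t * m) + m * B)) with hK0
    have hterm : ∀ p : M × ℕ, p ∈ C → ENNReal.ofReal
        (Real.exp (-(t * p.2) + supBirkhoff f ψ p.2 p.1 ε)) ≤ K0 := by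
      rintro p ⟨a, -, rfl⟩
      exact ENNReal.ofReal_le_ofReal (Real.exp_le_exp.mpr
        (add_le_add le_rfl (supBirkhoff_le hB hB0 m _ ε)))
    have hcard : Nat.card C ≤ c ^ m := by
      have h3 : R.ncard ≤ c ^ m := by
        have hsub : hRfin.toFinset ⊆ Fintype.piFinset (fun _ : Fin m => DF) := by
          intro a ha
          have haR : a ∈ R := hRfin.mem_toFinset.mp ha
          refine Fintype.mem_piFinset.mpr fun i => hDfin.mem_toFinset.mpr ?_
          exact hRsub haR i (Set.mem_univ i)
        calc R.ncard = hRfin.toFinset.card := Set.ncard_eq_toFinset_card R hRfin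
          _ ≤ (Fintype.piFinset (fun _ : Fin m => DF)).card := Finset.card_le_card hsub
          _ = ∏ _i : Fin m, DF.card := Fintype.card_piFinset _
          _ = c ^ m := by simp [hc]
      calc Nat.card C = C.ncard := Nat.card_coe_set_eq C
        _ ≤ R.ncard := Set.ncard_image_le hRfin
        _ ≤ c ^ m := h3
    have hsum : (∑' p : C, ENNReal.ofReal
        (Real.exp (-(t * (p : M × ℕ).2) + supBirkhoff f ψ (p : M × ℕ).2 (p : M × ℕ).1 ε)))
        ≤ (c ^ m : ℕ) * K0 := by
      calc (∑' p : C, ENNReal.ofReal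
          (Real.exp (-(t * (p : M × ℕ).2) + supBirkhoff f ψ (p : M × ℕ).2 (p : M × ℕ).1 ε)))
          ≤ ∑' _p : C, K0 := ENNReal.tsum_le_tsum fun p => hterm _ p.2
        _ = Nat.card C • K0 := by
            haveI := hCfin.fintype
            rw [tsum_fintype, Finset.sum_const, Finset.card_univ, Nat.card_eq_fintype_card]
        _ ≤ (c ^ m) • K0 := nsmul_le_nsmul_left zero_le hcard
        _ = (c ^ m : ℕ) * K0 := by rw [nsmul_eq_mul]
    refine le_trans hle (le_trans hsum ?_)
    -- compute : (c^m) * K0 = ofReal (exp (-m))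
    have hcalc : ((c ^ m : ℕ) : ℝ≥0∞) * K0 = ENNReal.ofReal (Real.exp (-(m:ℝ))) := by
      rw [hK0, ← ENNReal.ofReal_natCast, ← ENNReal.ofReal_mul (Nat.cast_nonneg _)]
      congr 1
      have h4 : ((c ^ m : ℕ) : ℝ) = Real.exp (m * Real.log c) := by
        rw [Real.exp_nat_mul, Real.exp_log hcR]
        push_cast
        ring
      rw [h4, ← Real.exp_add]
      congr 1
      rw [htdef]
      ring
    rw [← hcalc]
  -- let m → ∞
  have htend : Tendsto (fun m : ℕ => ENNReal.ofReal (Real.exp (-(m:ℝ)))) atTop (𝓝 0) := by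
    have h1 : Tendsto (fun m : ℕ => Real.exp (-(m:ℝ))) atTop (𝓝 0) :=
      Real.tendsto_exp_atBot.comp (tendsto_neg_atBot_iff.mpr tendsto_natCast_atTop_atTop)
    simpa using ENNReal.tendsto_ofReal h1
  refine le_antisymm ?_ zero_le
  refine ge_of_tendsto htend ?_
  filter_upwards [eventually_ge_atTop n] with m hm
  exact key m hm

end PDPaux


/-- Generalised Pressure Distribution Principle.  Let `(M,d,f)` be a
topological dynamical system, `ψ` continuous and `Z ⊆ M` Borel.  Suppose there are `ε > 0`,
`s ≥ 0`, a sequence of Borel probability measures `μ_k`, a constant `K > 0` and an integer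
`N` with `limsup_k μ_k(B_n(x,ε)) ≤ K exp(−ns + S_nψ(x))` for every Bowen ball `B_n(x,ε)`
meeting `Z` with `n ≥ N`, and suppose some weak* limit measure `ν` of `(μ_k)` has
`ν(Z) > 0`.  Then `P(Z,ψ,ε) ≥ s`. -/
theorem generalized_pressure_distribution_principle {M : Type*} [MetricSpace M]
    [CompactSpace M] [MeasurableSpace M] [BorelSpace M]
    (f : M → M) (hf : Continuous f) (ψ : M → ℝ) (hψ : Continuous ψ)
    (Z : Set M) (hZ : MeasurableSet Z)
    (ε s : ℝ) (hε : 0 < ε) (hs : 0 ≤ s)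
    (μ : ℕ → Measure M) (hμ : ∀ k, IsProbabilityMeasure (μ k))
    (K : ℝ) (hK : 0 < K) (N : ℕ)
    (hbound : ∀ (x : M) (n : ℕ), N ≤ n → (bowenBall f n x ε ∩ Z).Nonempty →
      Filter.atTop.limsup (fun k => μ k (bowenBall f n x ε)) ≤
        ENNReal.ofReal (K * Real.exp (-(n : ℝ) * s + birkhoff f ψ n x)))
    (ν : Measure M) (hν : IsProbabilityMeasure ν)
    (hlim : ∃ φ : ℕ → ℕ, StrictMono φ ∧ ∀ g : C(M, ℝ),
      Tendsto (fun k => ∫ x, g x ∂(μ (φ k))) atTop (𝓝 (∫ x, g x ∂ν)))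
    (hνZ : 0 < ν Z) :
    s ≤ pressureAt f ψ Z ε := by
  classical
  obtain ⟨φ, hφmono, hφlim⟩ := hlim
  -- the space is nonempty
  have hMne : Nonempty M := by
    obtain ⟨z, -⟩ := nonempty_of_measure_ne_zero hνZ.ne'
    exact ⟨z⟩
  -- a bound for ψ
  set Ψ : BoundedContinuousFunction M ℝ := BoundedContinuousFunction.mkOfCompact ⟨ψ, hψ⟩ with hΨ
  have hB : ∀ x, |ψ x| ≤ ‖Ψ‖ := fun x => by
    exact (by simpa [Real.norm_eq_abs] using Ψ.norm_coe_le_norm x : |Ψ x| ≤ ‖Ψ‖)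
  -- the set defining the pressure is nonempty
  obtain ⟨t₀, ht₀⟩ := exists_presLim_zero hf hψ Z hε (f := f)
  refine le_csInf ⟨t₀, ht₀⟩ ?_
  intro t ht
  simp only [Set.mem_setOf_eq] at ht
  by_contra hcon
  push_neg at hcon
  -- weak* convergence of the subsequence
  set Pν : ProbabilityMeasure M := ⟨ν, hν⟩ with hPν
  set Pk : ℕ → ProbabilityMeasure M := fun k => ⟨μ (φ k), hμ _⟩ with hPk
  have htend : Tendsto Pk atTop (𝓝 Pν) := by
    rw [MeasureTheory.ProbabilityMeasure.tendsto_iff_forall_integral_tendsto]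
    intro g
    exact hφlim g.toContinuousMap
  -- the key per-ball estimate for the limit measure
  have hball : ∀ (x : M) (m : ℕ), N ≤ m → (bowenBall f m x ε ∩ Z).Nonempty →
      ν (bowenBall f m x ε) ≤ ENNReal.ofReal K *
        ENNReal.ofReal (Real.exp (-(t * m) + supBirkhoff f ψ m x ε)) := by
    intro x m hm hmeet
    have h1 : ν (bowenBall f m x ε) ≤
        atTop.liminf (fun k => (Pk k : Measure M) (bowenBall f m x ε)) :=
      MeasureTheory.ProbabilityMeasure.le_liminf_measure_open_of_tendsto htend
        (isOpen_bowenBall hf m x ε)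
    have h2 : atTop.liminf (fun k => (Pk k : Measure M) (bowenBall f m x ε)) ≤
        atTop.limsup (fun k => (Pk k : Measure M) (bowenBall f m x ε)) :=
      liminf_le_limsup
    have h3 : atTop.limsup (fun k => (Pk k : Measure M) (bowenBall f m x ε)) ≤
        atTop.limsup (fun k => μ k (bowenBall f m x ε)) := by
      have hmap : map φ atTop ≤ (atTop : Filter ℕ) := hφmono.tendsto_atTop
      calc atTop.limsup (fun k => (Pk k : Measure M) (bowenBall f m x ε))
          = limsup ((fun k => μ k (bowenBall f m x ε)) ∘ φ) atTop := rfl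
        _ = limsup (fun k => μ k (bowenBall f m x ε)) (map φ atTop) :=
            Filter.limsup_comp _ _ _
        _ ≤ atTop.limsup (fun k => μ k (bowenBall f m x ε)) :=
            limsup_le_limsup_of_le hmap
    have h4 := hbound x m hm hmeet
    have h5 : ENNReal.ofReal (K * Real.exp (-(m:ℝ) * s + birkhoff f ψ m x)) ≤
        ENNReal.ofReal K *
          ENNReal.ofReal (Real.exp (-(t * m) + supBirkhoff f ψ m x ε)) := by
      rw [← ENNReal.ofReal_mul hK.le]
      refine ENNReal.ofReal_le_ofReal (mul_le_mul_of_nonneg_left ?_ hK.le)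
      refine Real.exp_le_exp.mpr (add_le_add ?_ (birkhoff_le_supBirkhoff hB m x hε))
      have : t * m ≤ m * s := by
        rcases Nat.eq_zero_or_pos m with rfl | hmpos
        · simp
        · have : t * m ≤ s * m :=
            mul_le_mul_of_nonneg_right hcon.le (by positivity)
          linarith [this, mul_comm s (m:ℝ)]
      linarith
    exact h1.trans (h2.trans (h3.trans (h4.trans h5)))
  -- from presLim = 0 extract a cover with very small total weight
  have h0 : presPre f ψ Z t N ε = 0 := by
    have hle : presPre f ψ Z t N ε ≤ presLim f ψ Z t ε := by
      rw [presLim]; exact le_iSup (fun n => presPre f ψ Z t n ε) N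
    exact le_antisymm (ht ▸ hle) zero_le
  have hKfin : ENNReal.ofReal K ≠ ∞ := ENNReal.ofReal_ne_top
  have hK0' : ENNReal.ofReal K ≠ 0 := by
    simp [ENNReal.ofReal_eq_zero, not_le, hK]
  have hδpos : 0 < ν Z / ENNReal.ofReal K := ENNReal.div_pos hνZ.ne' hKfin
  have hlt : presPre f ψ Z t N ε < ν Z / ENNReal.ofReal K := h0 ▸ hδpos
  rw [presPre] at hlt
  obtain ⟨C, hlt⟩ := iInf_lt_iff.mp hlt
  obtain ⟨hCcnt, hlt⟩ := iInf_lt_iff.mp hlt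
  obtain ⟨hCge, hlt⟩ := iInf_lt_iff.mp hlt
  obtain ⟨hCcov, hlt⟩ := iInf_lt_iff.mp hlt
  -- but the cover has total weight at least ν Z / K : contradiction
  have hmain : ν Z ≤ ENNReal.ofReal K *
      ∑' p : C, ENNReal.ofReal
        (Real.exp (-(t * (p : M × ℕ).2) + supBirkhoff f ψ (p : M × ℕ).2 (p : M × ℕ).1 ε)) := by
    have hsub : Z ⊆ ⋃ p ∈ C, (Z ∩ bowenBall f p.2 p.1 ε) := by
      intro z hz
      obtain ⟨p, hp, hzp⟩ := Set.mem_iUnion₂.mp (hCcov hz)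
      exact Set.mem_biUnion hp ⟨hz, hzp⟩
    calc ν Z ≤ ν (⋃ p ∈ C, (Z ∩ bowenBall f p.2 p.1 ε)) := measure_mono hsub
      _ ≤ ∑' p : C, ν (Z ∩ bowenBall f (p : M × ℕ).2 (p : M × ℕ).1 ε) :=
          measure_biUnion_le ν hCcnt _
      _ ≤ ∑' p : C, ENNReal.ofReal K *
            ENNReal.ofReal
              (Real.exp (-(t * (p : M × ℕ).2) + supBirkhoff f ψ (p : M × ℕ).2 (p : M × ℕ).1 ε)) := by
          refine ENNReal.tsum_le_tsum fun p => ?_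
          by_cases hmeet : (bowenBall f (p : M × ℕ).2 (p : M × ℕ).1 ε ∩ Z).Nonempty
          · exact le_trans (measure_mono Set.inter_subset_right)
              (hball _ _ (hCge _ p.2) hmeet)
          · have : Z ∩ bowenBall f (p : M × ℕ).2 (p : M × ℕ).1 ε = ∅ := by
              rw [Set.not_nonempty_iff_eq_empty] at hmeet
              rw [Set.inter_comm]
              exact hmeet
            simp [this]
      _ = ENNReal.ofReal K *
            ∑' p : C, ENNReal.ofReal
              (Real.exp (-(t * (p : M × ℕ).2) + supBirkhoff f ψ (p : M × ℕ).2 (p : M × ℕ).1 ε)) :=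
          ENNReal.tsum_mul_left
  have hcontr : ν Z < ν Z := by
    calc ν Z ≤ ENNReal.ofReal K * ∑' p : C, ENNReal.ofReal
          (Real.exp (-(t * (p : M × ℕ).2) + supBirkhoff f ψ (p : M × ℕ).2 (p : M × ℕ).1 ε)) :=
          hmain
      _ < ENNReal.ofReal K * (ν Z / ENNReal.ofReal K) := by
          exact (ENNReal.mul_lt_mul_iff_right hK0' hKfin).mpr hlt
      _ = ν Z := ENNReal.mul_div_cancel hK0' hKfin
  exact absurd hcontr (lt_irrefl _)
end
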